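/- Let C ∈ H_n(ℂ) be a Hermitian matrix with C_{kk} = 1 for all k. Let z^{obj} ∈ ℂ^n be any maximizer of z ↦ z^*Cz over the set { z ∈ ℂ^n : |z_1| = … = |z_n| = 1 }. Let P : ℂ^n → ℂ^n be the entrywise phase projection, P(w)_k = w_k/|w_k| (with the convention 0/0 = 1). Then P(C z^{obj}) = z^{obj}, i.e. z^{obj} is a fixed point of the operator z ↦ P(Cz). -/

import Mathlib

open Matrix

/-- Entrywise phase projection: `phase w = w / |w|`, with the convention `0/0 = 1`. -/
noncomputable def phase (w : ℂ) : ℂ :=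
  letI := Classical.dec (w = 0)
  if w = 0 then 1 else w / ‖w‖

/-- any maximizer `z^{obj}` of `z ↦ z^* C z` over the torus
`{|z_1| = … = |z_n| = 1}` (for Hermitian `C` with unit diagonal) is a fixed
point of the generalized power method iteration `z ↦ P(Cz)`. -/
theorem gpm_fixed_point (n : ℕ) (C : Matrix (Fin n) (Fin n) ℂ)
    (hC : C.IsHermitian) (hdiag : ∀ k, C k k = 1)
    (zobj : Fin n → ℂ) (hz : ∀ k, ‖zobj k‖ = 1)
    (hmax : ∀ z : Fin n → ℂ, (∀ k, ‖z k‖ = 1) →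
      (∑ k, ∑ l, (starRingEnd ℂ) (z k) * C k l * z l).re ≤
        (∑ k, ∑ l, (starRingEnd ℂ) (zobj k) * C k l * zobj l).re) :
    ∀ k, phase (C.mulVec zobj k) = zobj k := by
  intro k
  classical
  set b : ℂ := ∑ l ∈ Finset.univ.erase k, C k l * zobj l with hbdef
  have hzk : ‖zobj k‖ = 1 := hz k
  have hzk0 : zobj k ≠ 0 := by
    intro h; rw [h] at hzk; simp at hzk
  have hconjb : (starRingEnd ℂ) b = ∑ i ∈ Finset.univ.erase k, (starRingEnd ℂ) (zobj i) * C i k := by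
    rw [hbdef, map_sum]
    refine Finset.sum_congr rfl fun i hi => ?_
    rw [_root_.map_mul, mul_comm, ← hC.apply i k]
    rfl
  -- key algebraic identity
  have key : ∀ u : ℂ,
      (∑ i, ∑ j, (starRingEnd ℂ) (Function.update zobj k u i) * C i j *
        Function.update zobj k u j)
      = (starRingEnd ℂ) u * u + ((starRingEnd ℂ) u * b + (starRingEnd ℂ) b * u)
        + ∑ i ∈ Finset.univ.erase k, ∑ j ∈ Finset.univ.erase k,
            (starRingEnd ℂ) (zobj i) * C i j * zobj j := by
    intro u
    rw [← Finset.add_sum_erase _ _ (Finset.mem_univ k)]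
    rw [← Finset.add_sum_erase _ (fun j => (starRingEnd ℂ) (Function.update zobj k u k) * C k j * Function.update zobj k u j) (Finset.mem_univ k)]
    have h1 : ∀ i ∈ Finset.univ.erase k, Function.update zobj k u i = zobj i := by
      intro i hi
      exact Function.update_of_ne (Finset.mem_erase.mp hi).1 _ _
    simp only [Function.update_self, hdiag, mul_one]
    have h2 : ∑ j ∈ Finset.univ.erase k, (starRingEnd ℂ) u * C k j * Function.update zobj k u j
        = (starRingEnd ℂ) u * b := by
      rw [hbdef, Finset.mul_sum]
      refine Finset.sum_congr rfl fun j hj => ?_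
      rw [h1 j hj]; ring
    rw [h2]
    have h3 : ∀ i ∈ Finset.univ.erase k,
        (∑ j, (starRingEnd ℂ) (Function.update zobj k u i) * C i j * Function.update zobj k u j)
        = (starRingEnd ℂ) (zobj i) * C i k * u
          + ∑ j ∈ Finset.univ.erase k, (starRingEnd ℂ) (zobj i) * C i j * zobj j := by
      intro i hi
      rw [← Finset.add_sum_erase _ _ (Finset.mem_univ k), h1 i hi, Function.update_self]
      congr 1
      refine Finset.sum_congr rfl fun j hj => by rw [h1 j hj]
    rw [Finset.sum_congr rfl h3, Finset.sum_add_distrib]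
    have h4 : ∑ i ∈ Finset.univ.erase k, (starRingEnd ℂ) (zobj i) * C i k * u
        = (starRingEnd ℂ) b * u := by
      rw [hconjb, Finset.sum_mul]
    rw [h4]; ring
  -- optimality consequence
  have hineq : ∀ u : ℂ, ‖u‖ = 1 →
      ((starRingEnd ℂ) u * b).re ≤ ((starRingEnd ℂ) (zobj k) * b).re := by
    intro u hu
    have hz' : ∀ j, ‖Function.update zobj k u j‖ = 1 := by
      intro j
      rcases eq_or_ne j k with rfl | hj
      · simpa using hu
      · rw [Function.update_of_ne hj]; exact hz j
    have := hmax _ hz'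
    rw [key u] at this
    have hrhs : (∑ i, ∑ j, (starRingEnd ℂ) (zobj i) * C i j * zobj j)
        = (starRingEnd ℂ) (zobj k) * zobj k
          + ((starRingEnd ℂ) (zobj k) * b + (starRingEnd ℂ) b * zobj k)
          + ∑ i ∈ Finset.univ.erase k, ∑ j ∈ Finset.univ.erase k,
              (starRingEnd ℂ) (zobj i) * C i j * zobj j := by
      have := key (zobj k)
      rwa [Function.update_eq_self] at this
    rw [hrhs] at this
    have hcm : ∀ w : ℂ, ‖w‖ = 1 → ((starRingEnd ℂ) w * w).re = 1 := by
      intro w hw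
      rw [mul_comm, Complex.mul_conj]
      rw [Complex.normSq_eq_norm_sq, hw]
      norm_num
    have hswap : ∀ v w : ℂ, ((starRingEnd ℂ) v * w).re = ((starRingEnd ℂ) w * v).re := by
      intro v w
      rw [← Complex.conj_re ((starRingEnd ℂ) v * w)]; simp [mul_comm]
    simp only [Complex.add_re] at this
    rw [hcm u hu, hcm (zobj k) hzk, hswap b u, hswap b (zobj k)] at this
    linarith
  -- show b = zobj k * |b|
  have hbeq : b = zobj k * (‖b‖ : ℝ) := by
    rcases eq_or_ne b 0 with hb0 | hb0
    · simp [hb0]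
    · have hub : ‖b / (‖b‖ : ℝ)‖ = 1 := by
        simp [map_div₀, hb0]
      have h1 := hineq _ hub
      have habs : ((starRingEnd ℂ) (b / (‖b‖ : ℝ)) * b).re = ‖b‖ := by
        rw [map_div₀, div_mul_eq_mul_div, mul_comm, Complex.mul_conj, Complex.normSq_eq_norm_sq]
        have hb0' : (‖b‖ : ℝ) ≠ 0 := by simpa using hb0
        simp
        rw [sq]
        field_simp
        norm_cast
      rw [habs] at h1
      have h2 : ((starRingEnd ℂ) (zobj k) * b).re ≤ ‖(starRingEnd ℂ) (zobj k) * b‖ :=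
        Complex.re_le_norm _
      have h3 : ‖(starRingEnd ℂ) (zobj k) * b‖ = ‖b‖ := by
        rw [norm_mul, Complex.norm_conj, hzk, one_mul]
      have h4 : ((starRingEnd ℂ) (zobj k) * b).re = ‖(starRingEnd ℂ) (zobj k) * b‖ := by
        rw [h3]; linarith
      have h5 : (starRingEnd ℂ) (zobj k) * b = (‖(starRingEnd ℂ) (zobj k) * b‖ : ℝ) := by
        have := Complex.re_eq_norm.mp h4
        exact (Complex.eq_coe_norm_of_nonneg this).trans (by simp)
      rw [h3] at h5
      have hck : zobj k * (starRingEnd ℂ) (zobj k) = 1 := by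
        rw [Complex.mul_conj, Complex.normSq_eq_norm_sq, hzk]; norm_num
      have := congrArg (fun w => zobj k * w) h5
      simp only [← mul_assoc, hck, one_mul] at this
      exact this
  -- conclude
  have hmv : C.mulVec zobj k = zobj k * (1 + (‖b‖ : ℝ)) := by
    have h0 : C.mulVec zobj k = ∑ l, C k l * zobj l := rfl
    rw [h0, ← Finset.add_sum_erase _ _ (Finset.mem_univ k), hdiag, one_mul, ← hbdef]
    conv_lhs => rw [hbeq]
    ring
  have habspos : (0:ℝ) < 1 + ‖b‖ := by positivity
  have hmvne : C.mulVec zobj k ≠ 0 := by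
    rw [hmv]
    apply mul_ne_zero hzk0
    intro h
    have : (1 + ‖b‖ : ℝ) = 0 := by exact_mod_cast h
    linarith
  rw [phase, if_neg hmvne, hmv]
  rw [norm_mul, hzk, one_mul]
  have : ‖(1:ℂ) + (‖b‖ : ℝ)‖ = 1 + ‖b‖ := by
    rw [← Complex.ofReal_one, ← Complex.ofReal_add, Complex.norm_real, Real.norm_eq_abs, abs_of_pos habspos]
  rw [this]
  rw [mul_div_assoc]
  rw [← Complex.ofReal_one, ← Complex.ofReal_add]
  rw [div_self (by exact_mod_cast habspos.ne')]
  ring
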